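/- Main bound for general bipartite graphs: Let G be a finite simple bipartite graph without isolated vertices, with parts L and R. For each d in the set D_L of degrees occurring among vertices of L, let L_d be the set of vertices of L of degree d, and let R_d be the set of vertices of R adjacent to at least one vertex of L_d. Then |I(G)| ≤ Π_{d ∈ D_L} Π_{r ∈ R_d} (2^d + 2^{d(r)} − 1)^{1/d}, where d(r) denotes the degree of the vertex r. -/

import Mathlib

open Finset MeasureTheory
open scoped ENNReal


lemma two_point_holder {ι : Type*} (s : Finset ι) (f g : ι → ℝ≥0∞) (p : ι → ℝ)
    (hp : ∀ i ∈ s, 0 < p i) (hsum : ∑ i ∈ s, 1 / p i = 1) :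
    (∏ i ∈ s, f i) + ∏ i ∈ s, g i ≤ ∏ i ∈ s, ((f i) ^ (p i) + (g i) ^ (p i)) ^ (1 / p i) := by
  have hxx : ∀ (x : ℝ≥0∞) i, i ∈ s → (x ^ p i) ^ (1 / p i) = x := fun x i hi => by
    rw [← ENNReal.rpow_mul, mul_one_div_cancel (hp i hi).ne', ENNReal.rpow_one]
  have key := ENNReal.lintegral_prod_norm_pow_le
      (μ := (Measure.dirac true + Measure.dirac false : Measure Bool)) s
      (f := fun i b => (bif b then f i else g i) ^ p i)
      (fun i _ => (Measurable.of_discrete).aemeasurable)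
      (p := fun i => 1 / p i) hsum
      (fun i hi => by have := hp i hi; positivity)
  rw [lintegral_add_measure, lintegral_dirac, lintegral_dirac] at key
  simp only [cond_true, cond_false] at key
  refine le_trans (le_of_eq ?_) (le_trans key (le_of_eq ?_))
  · congr 1
    · exact (Finset.prod_congr rfl fun i hi => hxx (f i) i hi).symm
    · exact (Finset.prod_congr rfl fun i hi => hxx (g i) i hi).symm
  · refine Finset.prod_congr rfl fun i hi => ?_
    rw [lintegral_add_measure, lintegral_dirac, lintegral_dirac]
    simp only [cond_true, cond_false]

lemma discrete_finner {V ι : Type*} [DecidableEq V] [DecidableEq ι] (Lc : Finset V) (I : Finset ι)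
    (S : ι → Finset V) (p : ι → ℝ) (f : ι → Finset V → ℝ≥0∞)
    (hp : ∀ i ∈ I, 0 < p i)
    (hS : ∀ i ∈ I, S i ⊆ Lc)
    (hdep : ∀ i ∈ I, ∀ A B : Finset V, A ∩ S i = B ∩ S i → f i A = f i B)
    (hcov : ∀ l ∈ Lc, ∑ i ∈ I.filter (fun i => l ∈ S i), 1 / p i = 1) :
    ∑ A ∈ Lc.powerset, ∏ i ∈ I, f i A ≤
      ∏ i ∈ I, (∑ A ∈ (S i).powerset, f i A ^ p i) ^ (1 / p i) := by
  classical
  induction Lc using Finset.induction generalizing S f with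
  | empty =>
      rw [Finset.powerset_empty, Finset.sum_singleton]
      refine le_of_eq (Finset.prod_congr rfl fun i hi => ?_).symm
      have hSi : S i = ∅ := Finset.subset_empty.mp (hS i hi)
      rw [hSi, Finset.powerset_empty, Finset.sum_singleton, ← ENNReal.rpow_mul,
        mul_one_div_cancel (hp i hi).ne', ENNReal.rpow_one]
  | @insert l L' hl ih =>
      set g : ι → Finset V → ℝ≥0∞ := fun i A =>
        if l ∈ S i then
          ((f i (A.erase l)) ^ p i + (f i (insert l (A.erase l))) ^ p i) ^ (1 / p i)
        else f i A with hg
      have hS' : ∀ i ∈ I, (S i).erase l ⊆ L' := by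
        intro i hi x hx
        have hx1 := Finset.mem_of_mem_erase hx
        have hx2 := Finset.ne_of_mem_erase hx
        rcases Finset.mem_insert.mp (hS i hi hx1) with h | h
        · exact absurd h hx2
        · exact h
      have hinterase : ∀ (A : Finset V) i, A ∩ (S i).erase l = (A.erase l) ∩ S i := by
        intro A i
        ext x
        simp only [Finset.mem_inter, Finset.mem_erase]
        tauto
      have hinsert_inter : ∀ (A : Finset V) i, l ∈ S i →
          (insert l (A.erase l)) ∩ S i = insert l (A ∩ (S i).erase l) := by
        intro A i hli
        ext x
        simp only [Finset.mem_inter, Finset.mem_insert, Finset.mem_erase]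
        constructor
        · rintro ⟨h1 | ⟨hne, hA⟩, h3⟩
          · exact Or.inl h1
          · exact Or.inr ⟨hA, hne, h3⟩
        · rintro (h | ⟨hA, hne, hSx⟩)
          · exact ⟨Or.inl h, h ▸ hli⟩
          · exact ⟨Or.inr ⟨hne, hA⟩, hSx⟩
      have hdep' : ∀ i ∈ I, ∀ A B : Finset V, A ∩ (S i).erase l = B ∩ (S i).erase l →
          g i A = g i B := by
        intro i hi A B hAB
        by_cases hli : l ∈ S i
        · have h1 : f i (A.erase l) = f i (B.erase l) := by
            apply hdep i hi
            rw [← hinterase, ← hinterase, hAB]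
          have h2 : f i (insert l (A.erase l)) = f i (insert l (B.erase l)) := by
            apply hdep i hi
            rw [hinsert_inter A i hli, hinsert_inter B i hli, hAB]
          simp only [hg, if_pos hli, h1, h2]
        · have hSe : (S i).erase l = S i := Finset.erase_eq_of_notMem hli
          simp only [hg, if_neg hli]
          exact hdep i hi A B (hSe ▸ hAB)
      have hcov' : ∀ l' ∈ L', ∑ i ∈ I.filter (fun i => l' ∈ (S i).erase l), 1 / p i = 1 := by
        intro l' hl'
        have hne : l' ≠ l := fun h => hl (h ▸ hl')
        have : I.filter (fun i => l' ∈ (S i).erase l) = I.filter (fun i => l' ∈ S i) := by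
          apply Finset.filter_congr
          intro i _
          simp [Finset.mem_erase, hne]
        rw [this]
        exact hcov l' (Finset.mem_insert_of_mem hl')
      have key := ih (fun i => (S i).erase l) g hS' hdep' hcov'
      -- pointwise bound
      have hpt : ∀ A ∈ L'.powerset,
          (∏ i ∈ I, f i A) + ∏ i ∈ I, f i (insert l A) ≤ ∏ i ∈ I, g i A := by
        intro A hA
        have hlA : l ∉ A := fun h => hl (Finset.mem_powerset.mp hA h)
        have hAe : A.erase l = A := Finset.erase_eq_of_notMem hlA
        rw [← Finset.prod_filter_mul_prod_filter_not I (fun i => l ∈ S i) (fun i => f i A),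
          ← Finset.prod_filter_mul_prod_filter_not I (fun i => l ∈ S i) (fun i => f i (insert l A)),
          ← Finset.prod_filter_mul_prod_filter_not I (fun i => l ∈ S i) (fun i => g i A)]
        have hnot : ∀ i ∈ I.filter (fun i => ¬ l ∈ S i), f i (insert l A) = f i A := by
          intro i hi
          obtain ⟨hiI, hli⟩ := Finset.mem_filter.mp hi
          apply hdep i hiI
          ext x
          simp only [Finset.mem_inter, Finset.mem_insert]
          constructor
          · rintro ⟨h1 | h1, h2⟩
            · exact absurd (h1 ▸ h2) hli
            · exact ⟨h1, h2⟩
          · rintro ⟨h1, h2⟩; exact ⟨Or.inr h1, h2⟩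
        have hnotg : ∀ i ∈ I.filter (fun i => ¬ l ∈ S i), g i A = f i A := by
          intro i hi
          simp only [hg, if_neg (Finset.mem_filter.mp hi).2]
        rw [Finset.prod_congr rfl hnot, Finset.prod_congr rfl hnotg, ← add_mul]
        apply mul_le_mul_left
        have hh := two_point_holder (I.filter (fun i => l ∈ S i))
          (fun i => f i A) (fun i => f i (insert l A)) p
          (fun i hi => hp i (Finset.mem_filter.mp hi).1)
          (hcov l (Finset.mem_insert_self l L'))
        refine le_trans hh (le_of_eq (Finset.prod_congr rfl fun i hi => ?_))
        simp only [hg, if_pos (Finset.mem_filter.mp hi).2, hAe]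
      calc ∑ A ∈ (insert l L').powerset, ∏ i ∈ I, f i A
          = ∑ A ∈ L'.powerset, ((∏ i ∈ I, f i A) + ∏ i ∈ I, f i (insert l A)) := by
            rw [Finset.sum_powerset_insert hl, Finset.sum_add_distrib]
        _ ≤ ∑ A ∈ L'.powerset, ∏ i ∈ I, g i A := Finset.sum_le_sum hpt
        _ ≤ ∏ i ∈ I, (∑ A ∈ ((S i).erase l).powerset, g i A ^ p i) ^ (1 / p i) := key
        _ = ∏ i ∈ I, (∑ A ∈ (S i).powerset, f i A ^ p i) ^ (1 / p i) := by
            refine Finset.prod_congr rfl fun i hi => ?_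
            by_cases hli : l ∈ S i
            · congr 1
              have hle : l ∉ (S i).erase l := Finset.notMem_erase l _
              rw [← Finset.insert_erase hli, Finset.sum_powerset_insert hle]
              rw [Finset.insert_erase hli]
              have : ∀ A ∈ ((S i).erase l).powerset,
                  g i A ^ p i = f i A ^ p i + f i (insert l A) ^ p i := by
                intro A hA
                have hlA : l ∉ A := fun h => (Finset.notMem_erase l (S i))
                  (Finset.mem_powerset.mp hA h)
                have hAe : A.erase l = A := Finset.erase_eq_of_notMem hlA
                simp only [hg, if_pos hli, hAe, ← ENNReal.rpow_mul]
                rw [one_div_mul_cancel (hp i hi).ne', ENNReal.rpow_one]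
              rw [Finset.sum_congr rfl this, Finset.sum_add_distrib]
            · have hSe : (S i).erase l = S i := Finset.erase_eq_of_notMem hli
              rw [hSe]
              congr 1
              refine Finset.sum_congr rfl fun A _ => ?_
              simp only [hg, if_neg hli]

/-- The number of independent sets of a graph `G` (a set of vertices no two of which
are adjacent; the empty set counts). -/
noncomputable def numIndep {V : Type*} (G : SimpleGraph V) : ℕ :=
  Nat.card {s : Finset V // ∀ u ∈ s, ∀ v ∈ s, ¬ G.Adj u v}

/-- **Main bound for general bipartite graphs.** Let `G` be a finite simple bipartite
graph without isolated vertices, with parts `L` and `R`. For each degree `d` occurring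
among the vertices of `L`, let `L_d` be the vertices of `L` of degree `d`, and let
`R_d` be the vertices of `R` adjacent to at least one vertex of `L_d`. Then
`|I(G)| ≤ ∏_{d ∈ D_L} ∏_{r ∈ R_d} (2^d + 2^(d(r)) - 1)^(1/d)`. -/
theorem main_bound_bipartite {V : Type*} [Fintype V] [DecidableEq V]
    (G : SimpleGraph V) [DecidableRel G.Adj] (L R : Finset V)
    (hdisj : Disjoint L R) (hunion : L ∪ R = Finset.univ)
    (hbip : ∀ u v, G.Adj u v → (u ∈ L ∧ v ∈ R) ∨ (u ∈ R ∧ v ∈ L))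
    (hiso : ∀ v : V, 0 < G.degree v) :
    (numIndep G : ℝ) ≤
      ∏ d ∈ L.image (fun v => G.degree v),
        ∏ r ∈ R.filter (fun r => ∃ l ∈ L, G.degree l = d ∧ G.Adj l r),
          ((2 : ℝ) ^ d + 2 ^ (G.degree r) - 1) ^ (1 / (d : ℝ)) := by
  classical
  set D : Finset ℕ := L.image (fun v => G.degree v) with hD
  set Rd : ℕ → Finset V := fun d => R.filter (fun r => ∃ l ∈ L, G.degree l = d ∧ G.Adj l r)
    with hRd
  have hRmem : ∀ u v, G.Adj u v → u ∈ L → v ∈ R := by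
    intro u v h hu
    rcases hbip u v h with ⟨_, h2⟩ | ⟨h1, _⟩
    · exact h2
    · exact absurd hu (Finset.disjoint_right.mp hdisj h1)
  have hLmem : ∀ u v, G.Adj u v → u ∈ R → v ∈ L := by
    intro u v h hu
    rcases hbip u v h with ⟨h1, _⟩ | ⟨_, h2⟩
    · exact absurd hu (Finset.disjoint_left.mp hdisj h1)
    · exact h2
  -- index set
  set emb : (d : ℕ) → (V ↪ ℕ × V) := fun d => ⟨fun r => (d, r), Prod.mk_right_injective d⟩ with hemb
  set I : Finset (ℕ × V) := D.biUnion (fun d => (Rd d).map (emb d)) with hI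
  have hmemI : ∀ d r, (d, r) ∈ I ↔ d ∈ D ∧ r ∈ Rd d := by
    intro d r
    simp only [hI, Finset.mem_biUnion, Finset.mem_map, hemb,
      Function.Embedding.coeFn_mk, Prod.mk.injEq]
    constructor
    · rintro ⟨d', hd', r', hr', rfl, rfl⟩
      exact ⟨hd', hr'⟩
    · rintro ⟨hd, hr⟩
      exact ⟨d, hd, r, hr, rfl, rfl⟩
  have hprodI : ∀ h : ℕ × V → ℝ≥0∞,
      ∏ i ∈ I, h i = ∏ d ∈ D, ∏ r ∈ Rd d, h (d, r) := by
    intro h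
    rw [hI, Finset.prod_biUnion]
    · exact Finset.prod_congr rfl fun d _ => Finset.prod_map _ _ _
    · intro d1 h1 d2 h2 hne
      simp only [Function.onFun]
      rw [Finset.disjoint_left]
      rintro ⟨a, b⟩ ha hb
      simp only [Finset.mem_map, hemb, Function.Embedding.coeFn_mk, Prod.mk.injEq] at ha hb
      obtain ⟨_, _, rfl, _⟩ := ha
      obtain ⟨_, _, h2', _⟩ := hb
      exact hne h2'.symm
  set S : ℕ × V → Finset V := fun i =>
    (G.neighborFinset i.2) ∩ (L.filter (fun v => G.degree v = i.1)) with hS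
  set p : ℕ × V → ℝ := fun i => (i.1 : ℝ) with hp
  set f : ℕ × V → Finset V → ℝ≥0∞ := fun i A => if A ∩ S i = ∅ then 2 else 1 with hf
  -- step (1): counting
  have hcount : (numIndep G : ℝ≥0∞) ≤ ∑ A ∈ L.powerset,
      ∏ r ∈ R, (if A ∩ G.neighborFinset r = ∅ then (2 : ℝ≥0∞) else 1) := by
    have hnum : numIndep G =
        (Finset.univ.filter (fun s : Finset V => ∀ u ∈ s, ∀ v ∈ s, ¬ G.Adj u v)).card := by
      rw [numIndep, Nat.card_eq_fintype_card, Fintype.card_subtype]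
    have hfib := Finset.card_eq_sum_card_fiberwise (f := fun s : Finset V => s ∩ L)
      (t := L.powerset)
      (s := Finset.univ.filter (fun s : Finset V => ∀ u ∈ s, ∀ v ∈ s, ¬ G.Adj u v))
      (fun s _ => Finset.mem_powerset.mpr Finset.inter_subset_right)
    have hfb : ∀ A ∈ L.powerset,
        ((Finset.univ.filter (fun s : Finset V => ∀ u ∈ s, ∀ v ∈ s, ¬ G.Adj u v)).filter
          (fun s => s ∩ L = A)).card ≤
          2 ^ (R.filter (fun r => A ∩ G.neighborFinset r = ∅)).card := by
      intro A hA
      rw [← Finset.card_powerset]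
      apply Finset.card_le_card_of_injOn (fun s => s ∩ R)
      · intro s hs
        simp only [Finset.mem_coe, Finset.mem_filter, Finset.mem_univ, true_and] at hs
        obtain ⟨hind, hsL⟩ := hs
        refine Finset.mem_powerset.mpr fun r hr => ?_
        obtain ⟨hrs, hrR⟩ := Finset.mem_inter.mp hr
        refine Finset.mem_filter.mpr ⟨hrR, ?_⟩
        rw [Finset.eq_empty_iff_forall_notMem]
        intro a ha
        obtain ⟨haA, haN⟩ := Finset.mem_inter.mp ha
        have has : a ∈ s := (Finset.mem_inter.mp ((hsL ▸ haA : a ∈ s ∩ L))).1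
        exact hind r hrs a has ((SimpleGraph.mem_neighborFinset G r a).mp haN)
      · intro s1 h1 s2 h2 heq
        simp only [Finset.coe_filter, Set.mem_setOf_eq] at h1 h2
        have hrec : ∀ s : Finset V, s = (s ∩ L) ∪ (s ∩ R) := by
          intro s
          rw [← Finset.inter_union_distrib_left, hunion, Finset.inter_univ]
        rw [hrec s1, hrec s2, h1.2, h2.2]
        exact congrArg (fun x => A ∪ x) heq
    calc (numIndep G : ℝ≥0∞)
        = ((∑ A ∈ L.powerset,
            ((Finset.univ.filter (fun s : Finset V => ∀ u ∈ s, ∀ v ∈ s, ¬ G.Adj u v)).filter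
              (fun s => s ∩ L = A)).card : ℕ) : ℝ≥0∞) := by rw [hnum, hfib]
      _ ≤ ((∑ A ∈ L.powerset,
            2 ^ (R.filter (fun r => A ∩ G.neighborFinset r = ∅)).card : ℕ) : ℝ≥0∞) := by
          exact_mod_cast Finset.sum_le_sum hfb
      _ = _ := by
          push_cast
          refine Finset.sum_congr rfl fun A hA => ?_
          rw [Finset.prod_ite, Finset.prod_const, Finset.prod_const, one_pow, mul_one]
  -- step (2): pointwise
  have hpoint : ∀ A ∈ L.powerset,
      ∏ r ∈ R, (if A ∩ G.neighborFinset r = ∅ then (2 : ℝ≥0∞) else 1) ≤ ∏ i ∈ I, f i A := by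
    intro A hA
    have hone : ∀ (d : ℕ) (r : V), (1 : ℝ≥0∞) ≤ f (d, r) A := by
      intro d r
      simp only [hf]
      split
      · exact one_le_two
      · exact le_refl 1
    have hsplit : ∏ i ∈ I, f i A = ∏ r ∈ R, ∏ d ∈ D.filter (fun d => r ∈ Rd d), f (d, r) A := by
      rw [hprodI (fun i => f i A)]
      refine Finset.prod_comm' fun d r => ?_
      constructor
      · rintro ⟨h1, h2⟩
        exact ⟨Finset.mem_filter.mpr ⟨h1, h2⟩, Finset.mem_of_mem_filter r h2⟩
      · rintro ⟨h1, h2⟩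
        obtain ⟨h3, h4⟩ := Finset.mem_filter.mp h1
        exact ⟨h3, h4⟩
    refine le_of_le_of_eq (Finset.prod_le_prod' fun r hr => ?_) hsplit.symm
    by_cases hAr : A ∩ G.neighborFinset r = ∅
    · rw [if_pos hAr]
      obtain ⟨u, hu⟩ := (G.degree_pos_iff_exists_adj r).mp (hiso r)
      have huL : u ∈ L := hLmem r u hu hr
      have hd₀D : G.degree u ∈ D := Finset.mem_image.mpr ⟨u, huL, rfl⟩
      have hrRd : r ∈ Rd (G.degree u) := Finset.mem_filter.mpr ⟨hr, u, huL, rfl, hu.symm⟩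
      have hmem : G.degree u ∈ D.filter (fun d => r ∈ Rd d) :=
        Finset.mem_filter.mpr ⟨hd₀D, hrRd⟩
      have hval : f (G.degree u, r) A = 2 := by
        simp only [hf]
        rw [if_pos]
        rw [Finset.eq_empty_iff_forall_notMem]
        intro x hx
        obtain ⟨hxA, hxS⟩ := Finset.mem_inter.mp hx
        have hxN : x ∈ G.neighborFinset r := (Finset.mem_inter.mp hxS).1
        exact (Finset.eq_empty_iff_forall_notMem.mp hAr x) (Finset.mem_inter.mpr ⟨hxA, hxN⟩)
      calc (2 : ℝ≥0∞) = f (G.degree u, r) A := hval.symm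
        _ ≤ _ := Finset.single_le_prod' (fun d _ => hone d r) hmem
    · rw [if_neg hAr]
      exact Finset.one_le_prod' fun d _ => hone d r
  -- Finner hypotheses
  have hposd : ∀ i ∈ I, 0 < i.1 := by
    rintro ⟨d, r⟩ hi
    obtain ⟨hd, _⟩ := (hmemI d r).mp hi
    obtain ⟨l, _, rfl⟩ := Finset.mem_image.mp hd
    exact hiso l
  have hfinner := discrete_finner L I S p f
    (fun i hi => by exact_mod_cast Nat.cast_pos.mpr (hposd i hi))
    (fun i hi => (Finset.inter_subset_right).trans (Finset.filter_subset _ _))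
    (fun i hi A B hAB => by simp only [hf, hAB])
    (by
      intro l hl
      have hfl : I.filter (fun i => l ∈ S i) = (G.neighborFinset l).map (emb (G.degree l)) := by
        ext ⟨d, r⟩
        simp only [Finset.mem_filter, Finset.mem_map, hemb, Function.Embedding.coeFn_mk,
          Prod.mk.injEq, hmemI, hS, Finset.mem_inter, SimpleGraph.mem_neighborFinset, hRd]
        constructor
        · rintro ⟨⟨hd, hr⟩, hadj, hlL, hdeg⟩
          exact ⟨r, hadj.symm, hdeg, rfl⟩
        · rintro ⟨r', hr', rfl, rfl⟩
          exact ⟨⟨Finset.mem_image.mpr ⟨l, hl, rfl⟩, hRmem l r' hr' hl, l, hl, rfl, hr'⟩,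
            hr'.symm, hl, rfl⟩
      rw [hfl, Finset.sum_map]
      simp only [hemb, Function.Embedding.coeFn_mk, hp]
      rw [Finset.sum_const, SimpleGraph.card_neighborFinset_eq_degree, nsmul_eq_mul,
        mul_one_div_cancel]
      exact_mod_cast (hiso l).ne')
  -- step (4): norms
  have hnorm : ∀ i ∈ I, (∑ A ∈ (S i).powerset, f i A ^ p i) ≤
      ((2 ^ i.1 + 2 ^ (G.degree i.2) - 1 : ℕ) : ℝ≥0∞) := by
    rintro ⟨d, r⟩ hi
    have hemp : (∅ : Finset V) ∈ (S (d, r)).powerset := Finset.empty_mem_powerset _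
    rw [← Finset.add_sum_erase _ _ hemp]
    have h1 : f (d, r) ∅ ^ p (d, r) = (2 : ℝ≥0∞) ^ d := by
      simp only [hf, hp, Finset.empty_inter, if_pos rfl]
      exact ENNReal.rpow_natCast 2 d
    have h2 : ∀ A ∈ ((S (d, r)).powerset).erase ∅, f (d, r) A ^ p (d, r) = 1 := by
      intro A hA
      obtain ⟨hne, hA⟩ := Finset.mem_erase.mp hA
      have hAS : A ∩ S (d, r) = A := Finset.inter_eq_left.mpr (Finset.mem_powerset.mp hA)
      simp only [hf, hp, hAS, if_neg hne, ENNReal.one_rpow]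
    rw [h1, Finset.sum_congr rfl h2, Finset.sum_const, Finset.card_erase_of_mem hemp,
      Finset.card_powerset, nsmul_eq_mul, mul_one]
    have hcard : (S (d, r)).card ≤ G.degree r := by
      have hsub : S (d, r) ⊆ G.neighborFinset r := Finset.inter_subset_left
      have := Finset.card_le_card hsub
      rwa [SimpleGraph.card_neighborFinset_eq_degree] at this
    have hnat : 2 ^ d + (2 ^ (S (d, r)).card - 1) ≤ 2 ^ d + 2 ^ (G.degree r) - 1 := by
      rw [Nat.add_sub_assoc Nat.one_le_two_pow]
      exact Nat.add_le_add_left (Nat.sub_le_sub_right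
        (Nat.pow_le_pow_right (by norm_num) hcard) 1) _
    calc (2 : ℝ≥0∞) ^ d + ((2 ^ (S (d, r)).card - 1 : ℕ) : ℝ≥0∞)
        = ((2 ^ d + (2 ^ (S (d, r)).card - 1) : ℕ) : ℝ≥0∞) := by push_cast; ring
      _ ≤ _ := by exact_mod_cast hnat
  have hmain : (numIndep G : ℝ≥0∞) ≤
      ∏ d ∈ D, ∏ r ∈ Rd d, ((2 ^ d + 2 ^ (G.degree r) - 1 : ℕ) : ℝ≥0∞) ^ (1 / (d : ℝ)) := by
    refine le_trans hcount (le_trans (Finset.sum_le_sum hpoint) (le_trans hfinner ?_))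
    rw [← hprodI (fun i => ((2 ^ i.1 + 2 ^ (G.degree i.2) - 1 : ℕ) : ℝ≥0∞) ^ (1 / (i.1 : ℝ)))]
    refine Finset.prod_le_prod' fun i hi => ?_
    exact ENNReal.rpow_le_rpow (hnorm i hi) (by positivity)
  -- conversion to ℝ
  have hfin : (∏ d ∈ D, ∏ r ∈ Rd d,
      ((2 ^ d + 2 ^ (G.degree r) - 1 : ℕ) : ℝ≥0∞) ^ (1 / (d : ℝ))) ≠ ⊤ := by
    refine (ENNReal.prod_lt_top fun d _ => ?_).ne
    refine ENNReal.prod_lt_top fun r _ => ?_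
    exact (ENNReal.rpow_ne_top_of_nonneg (by positivity) (ENNReal.natCast_ne_top _)).lt_top
  have hto := ENNReal.toReal_mono hfin hmain
  rw [ENNReal.toReal_natCast] at hto
  refine le_trans hto (le_of_eq ?_)
  rw [ENNReal.toReal_prod]
  refine Finset.prod_congr rfl fun d hd => ?_
  rw [ENNReal.toReal_prod]
  refine Finset.prod_congr rfl fun r hr => ?_
  rw [← ENNReal.toReal_rpow, ENNReal.toReal_natCast]
  congr 1
  have h1 : (1 : ℕ) ≤ 2 ^ d + 2 ^ (G.degree r) :=
    le_trans Nat.one_le_two_pow (Nat.le_add_right _ _)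
  rw [Nat.cast_sub h1]
  push_cast
  ring
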